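/- For positive reals d1, d2, the equation r1 = r2, where r1 = 1/(2x1) - c*x2/(2 d1 x1^2), r2 = 1/(2x2) + c*(x2/(4 d2 x1^2) - 1/(d2 x2)) with c = d1*d2/(d1+4*d2), restricted to x1 = 1 and x2 > 0, has exactly two solutions: x2 = 2 and x2 = 4*d2/(d1+2*d2). -/

import Mathlib

/-- The normalized Einstein equation r1 = r2 with x1 = 1 has exactly the two
positive solutions x2 = 2 and x2 = 4 d2/(d1 + 2 d2). -/
theorem stmt_2 (d1 d2 : ℝ) (hd1 : 0 < d1) (hd2 : 0 < d2) :
    let c := d1 * d2 / (d1 + 4 * d2)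
    {x2 : ℝ | 0 < x2 ∧
      1 / (2 * (1:ℝ)) - c * x2 / (2 * d1 * 1 ^ 2) =
        1 / (2 * x2) + c * (x2 / (4 * d2 * 1 ^ 2) - 1 / (2 * d2 * x2))} =
      {2, 4 * d2 / (d1 + 2 * d2)} := by
  intro c
  have hD : d1 + 4 * d2 ≠ 0 := by positivity
  have hE : d1 + 2 * d2 ≠ 0 := by positivity
  ext x
  simp only [Set.mem_setOf_eq, Set.mem_insert_iff, Set.mem_singleton_iff]
  constructor
  · rintro ⟨hx, heq⟩
    have hx' : x ≠ 0 := ne_of_gt hx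
    have key : (x - 2) * ((d1 + 2 * d2) * x - 4 * d2) = 0 := by
      have hz : (16 * d1 * d2 ^ 2 * (d1 + 4 * d2) * x) ≠ 0 := by positivity
      refine (mul_eq_zero.1 ?_).resolve_left hz
      simp only [c] at heq
      field_simp at heq
      linear_combination (-8 * d1 * d2 ^ 2 * (d1 + 4 * d2) * x) * heq
    rcases mul_eq_zero.1 key with h | h
    · left; linarith
    · right
      rw [eq_div_iff hE]
      linarith
  · rintro (rfl | rfl)
    · refine ⟨by norm_num, ?_⟩
      simp only [c]
      field_simp
      ring
    · refine ⟨by positivity, ?_⟩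
      have h4 : 4 * d2 / (d1 + 2 * d2) ≠ 0 := by positivity
      simp only [c]
      field_simp
      ring
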